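/- Let χ be a non-principal Dirichlet character modulo q and let I be a subset of {1, ..., q}. Then |∑_{n ∈ I} χ(n)| ≤ φ(q)/2. -/

import Mathlib

theorem stmt_4 (q : ℕ) (hq : 2 ≤ q) (χ : DirichletCharacter ℂ q) (hχ : χ ≠ 1)
    (I : Finset ℕ) (hI : I ⊆ Finset.Icc 1 q) :
    ‖∑ n ∈ I, χ n‖ ≤ (Nat.totient q : ℝ) / 2 := by
  haveI : NeZero q := ⟨by omega⟩
  classical
  set p : ℕ → Prop := fun n => IsUnit ((n : ZMod q)) with hp
  set U : Finset ℕ := (Finset.Icc 1 q).filter p with hU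
  -- card of U is totient
  have hcard : U.card = q.totient := by
    rw [← Nat.filter_coprime_Ico_eq_totient q 1]
    congr 1
    rw [hU]
    have : Finset.Icc 1 q = Finset.Ico 1 (1 + q) := by
      rw [add_comm, Finset.Ico_add_one_right_eq_Icc]
    rw [this]
    apply Finset.filter_congr
    intro x _
    simp only [hp, ZMod.isUnit_iff_coprime, Nat.coprime_comm, eq_iff_iff]
  -- sum over range q equals sum over ZMod q
  have hrange : ∑ n ∈ Finset.range q, χ (n : ZMod q) = ∑ a : ZMod q, χ a := by
    refine Finset.sum_nbij' (fun n => ((n : ZMod q))) (fun a => a.val) ?_ ?_ ?_ ?_ ?_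
    · intro a _; exact Finset.mem_univ _
    · intro a _; exact Finset.mem_range.mpr (ZMod.val_lt a)
    · intro a ha; exact ZMod.val_natCast_of_lt (Finset.mem_range.mp ha)
    · intro a _; exact ZMod.natCast_rightInverse a
    · intro a _; rfl
  -- sum over Icc 1 q equals sum over range q
  have hIcc : ∑ n ∈ Finset.Icc 1 q, χ (n : ZMod q) = ∑ n ∈ Finset.range q, χ (n : ZMod q) := by
    have h1 : Finset.Icc 1 q = insert q (Finset.Ico 1 q) := (Finset.Ico_insert_right (by omega)).symm
    have h2 : Finset.range q = insert 0 (Finset.Ico 1 q) := by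
      rw [Finset.range_eq_Ico, ← Finset.insert_Ico_add_one_left_eq_Ico (by omega : 0 < q), zero_add]
    rw [h1, h2, Finset.sum_insert (by simp), Finset.sum_insert (by simp)]
    congr 1
    norm_num [ZMod.natCast_self]
  -- sum over U is zero
  have hUsum : ∑ n ∈ U, χ (n : ZMod q) = 0 := by
    rw [hU, Finset.sum_filter_of_ne, hIcc, hrange, MulChar.sum_eq_zero_of_ne_one hχ]
    intro x _ hx
    by_contra h
    exact hx (χ.map_nonunit h)
  -- restrict I to units
  set J : Finset ℕ := I.filter p with hJ
  have hJU : J ⊆ U := Finset.filter_subset_filter p hI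
  have hSI : ∑ n ∈ I, χ (n : ZMod q) = ∑ n ∈ J, χ (n : ZMod q) := by
    rw [hJ, Finset.sum_filter_of_ne]
    intro x _ hx
    by_contra h
    exact hx (χ.map_nonunit h)
  have hsplit : ∑ n ∈ U \ J, χ (n : ZMod q) + ∑ n ∈ J, χ (n : ZMod q) = ∑ n ∈ U, χ (n : ZMod q) :=
    Finset.sum_sdiff hJU
  have hneg : ∑ n ∈ J, χ (n : ZMod q) = -∑ n ∈ U \ J, χ (n : ZMod q) := by
    rw [hUsum] at hsplit; linear_combination hsplit
  -- generic bound
  have hbound : ∀ s : Finset ℕ, ‖∑ n ∈ s, χ (n : ZMod q)‖ ≤ (s.card : ℝ) := by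
    intro s
    calc ‖∑ n ∈ s, χ (n : ZMod q)‖ ≤ ∑ n ∈ s, ‖χ (n : ZMod q)‖ := by
          exact norm_sum_le _ _
      _ ≤ ∑ n ∈ s, (1 : ℝ) := Finset.sum_le_sum (fun n _ => χ.norm_le_one _)
      _ = (s.card : ℝ) := by simp
  have h1 := hbound J
  have h2 := hbound (U \ J)
  have hcards : ((U \ J).card : ℝ) + (J.card : ℝ) = (q.totient : ℝ) := by
    rw [← hcard]
    norm_cast
    exact Finset.card_sdiff_add_card_eq_card hJU
  rw [hSI]
  have h2' : ‖∑ n ∈ J, χ (n : ZMod q)‖ ≤ ((U \ J).card : ℝ) := by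
    rw [hneg, norm_neg]; exact h2
  linarith
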